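/- arXiv:2501.19138 — 6 statements merged into one kernel-verified Lean document; each statement's English description precedes it below -/
import Mathlib

section
/- The directional derivative of the duality gap V at a point z = (x,y) in the direction z' = (x',y') ∈ Δ^{n-1}×Δ^{n-1}, defined as the limit as ε→0+ of [V((1-ε)z + εz') − V(z)]/ε, exists and equals max_{i ∈ BR_r(y)} e_i^T R y' − min_{j ∈ BR_c(x)} (x')^T R e_j − V(z), where BR_r(y) is the set of pure best responses of the row player to y and BR_c(x) the set of pure best responses of the column player to x. -/
open Matrix Finset

variable {n : ℕ}

/-- Duality gap: V(x,y) = max_i e_i^T R y - min_j x^T R e_j. -/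
noncomputable def V [NeZero n] (R : Matrix (Fin n) (Fin n) ℝ) (x y : Fin n → ℝ) : ℝ :=
  (Finset.univ.sup' Finset.univ_nonempty fun i => (R *ᵥ y) i) -
  (Finset.univ.inf' Finset.univ_nonempty fun j => (x ᵥ* R) j)

/-- ρ-best responses of the row player against y. -/
def BRr (R : Matrix (Fin n) (Fin n) ℝ) (ρ : ℝ) (y : Fin n → ℝ) : Set (Fin n) :=
  {i | ∀ k, (R *ᵥ y) k ≤ (R *ᵥ y) i + ρ}

/-- ρ-best responses of the column player against x. -/
def BRc (R : Matrix (Fin n) (Fin n) ℝ) (ρ : ℝ) (x : Fin n → ℝ) : Set (Fin n) :=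
  {j | ∀ k, (x ᵥ* R) j ≤ (x ᵥ* R) k + ρ}

/-- ρ-directional derivative of the duality gap at (x,y) toward (x',y');
for ρ = 0 this is the exact directional derivative. -/
noncomputable def dirDeriv [NeZero n] (R : Matrix (Fin n) (Fin n) ℝ) (ρ : ℝ)
    (x y x' y' : Fin n → ℝ) : ℝ :=
  sSup ((fun i => (R *ᵥ y') i) '' BRr R ρ y) -
  sInf ((fun j => (x' ᵥ* R) j) '' BRc R ρ x) - V R x y

section Aux

variable [NeZero n]

/-- Set of maximizers of `g`, as a finset. -/
noncomputable def argmaxFin (g : Fin n → ℝ) : Finset (Fin n) :=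
  Finset.univ.filter (fun i => ∀ k, g k ≤ g i)

lemma argmaxFin_nonempty (g : Fin n → ℝ) : (argmaxFin g).Nonempty := by
  obtain ⟨i, _, hi⟩ := Finset.exists_max_image Finset.univ g Finset.univ_nonempty
  exact ⟨i, by simp [argmaxFin, fun k => hi k (Finset.mem_univ k)]⟩

lemma argmaxFin_val {g : Fin n → ℝ} {i : Fin n} (hi : i ∈ argmaxFin g) :
    g i = Finset.univ.sup' Finset.univ_nonempty g := by
  simp only [argmaxFin, Finset.mem_filter] at hi
  exact le_antisymm (Finset.le_sup' g (Finset.mem_univ i))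
    (Finset.sup'_le _ _ fun k _ => hi.2 k)

lemma inf'_neg {s : Finset (Fin n)} (hs : s.Nonempty) (f : Fin n → ℝ) :
    s.inf' hs (fun j => - f j) = - s.sup' hs f := by
  apply le_antisymm
  · obtain ⟨i, hi, hiv⟩ := Finset.exists_mem_eq_sup' hs f
    rw [hiv]
    exact Finset.inf'_le (fun j => - f j) hi
  · apply Finset.le_inf'
    intro k hk
    exact neg_le_neg (Finset.le_sup' f hk)

/-- Key lemma: for small positive ε, the max of `(1-ε)g + εh` equals
`(1-ε) max g + ε (max of h over argmax of g)`. -/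
lemma key_sup (g h : Fin n → ℝ) :
    ∀ᶠ ε in nhdsWithin (0:ℝ) (Set.Ioi 0),
      Finset.univ.sup' Finset.univ_nonempty (fun i => (1-ε) * g i + ε * h i)
        = (1-ε) * (Finset.univ.sup' Finset.univ_nonempty g)
          + ε * ((argmaxFin g).sup' (argmaxFin_nonempty g) h) := by
  set M := Finset.univ.sup' Finset.univ_nonempty g with hM
  set S := (argmaxFin g).sup' (argmaxFin_nonempty g) h with hS
  have hptwise : ∀ i : Fin n, ∀ᶠ ε in nhdsWithin (0:ℝ) (Set.Ioi 0),
      (1-ε) * g i + ε * h i ≤ (1-ε) * M + ε * S := by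
    intro i
    by_cases hiA : i ∈ argmaxFin g
    · have hgi : g i = M := argmaxFin_val hiA
      have hhi : h i ≤ S := Finset.le_sup' h hiA
      filter_upwards [self_mem_nhdsWithin,
        eventually_nhdsWithin_of_eventually_nhds (eventually_lt_nhds one_pos)]
        with ε hε hε1
      have h1 : (0:ℝ) ≤ 1 - ε := by linarith
      have hε0 : (0:ℝ) ≤ ε := le_of_lt (Set.mem_Ioi.mp hε)
      nlinarith [mul_le_mul_of_nonneg_left hhi hε0]
    · have hgi : g i < M := by
        simp only [argmaxFin, Finset.mem_filter, Finset.mem_univ, true_and, not_forall,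
          not_le] at hiA
        obtain ⟨k, hk⟩ := hiA
        exact lt_of_lt_of_le hk (Finset.le_sup' g (Finset.mem_univ k))
      have hcont : Filter.Tendsto (fun ε : ℝ => (1-ε) * (M - g i) + ε * (S - h i))
          (nhds 0) (nhds (M - g i)) := by
        have hC : Continuous (fun ε : ℝ => (1-ε) * (M - g i) + ε * (S - h i)) := by
          continuity
        have := hC.tendsto 0
        simpa using this
      have hev : ∀ᶠ ε in nhds (0:ℝ), 0 < (1-ε) * (M - g i) + ε * (S - h i) :=
        hcont.eventually (eventually_gt_nhds (by linarith))
      filter_upwards [eventually_nhdsWithin_of_eventually_nhds hev] with ε hε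
      nlinarith [hε]
  have hall := (Filter.eventually_all).2 hptwise
  filter_upwards [hall] with ε hε
  apply le_antisymm
  · exact Finset.sup'_le _ _ fun i _ => hε i
  · obtain ⟨i, hiA, hi⟩ := Finset.exists_mem_eq_sup' (argmaxFin_nonempty g) h
    have hgi : g i = M := argmaxFin_val hiA
    have heq : (1-ε) * M + ε * S = (1-ε) * g i + ε * h i := by rw [hgi, hS, hi]
    rw [heq]
    exact Finset.le_sup' (fun i => (1-ε) * g i + ε * h i) (Finset.mem_univ i)

end Aux

/-- The directional derivative of V at (x,y) toward (x',y') exists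
(as a one-sided limit ε → 0⁺) and equals
max_{i ∈ BR_r(y)} e_i^T R y' − min_{j ∈ BR_c(x)} x'^T R e_j − V(x,y). -/
theorem dualityGap_dirDeriv [NeZero n] (R : Matrix (Fin n) (Fin n) ℝ)
    (hR : ∀ i j, R i j ∈ Set.Icc (0:ℝ) 1)
    (x y x' y' : Fin n → ℝ)
    (hx : x ∈ stdSimplex ℝ (Fin n)) (hy : y ∈ stdSimplex ℝ (Fin n))
    (hx' : x' ∈ stdSimplex ℝ (Fin n)) (hy' : y' ∈ stdSimplex ℝ (Fin n)) :
    Filter.Tendsto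
      (fun ε : ℝ =>
        (V R ((1 - ε) • x + ε • x') ((1 - ε) • y + ε • y') - V R x y) / ε)
      (nhdsWithin 0 (Set.Ioi 0))
      (nhds (dirDeriv R 0 x y x' y')) := by
  classical
  set g : Fin n → ℝ := fun i => (R *ᵥ y) i with hg
  set h : Fin n → ℝ := fun i => (R *ᵥ y') i with hh
  set g' : Fin n → ℝ := fun j => -((x ᵥ* R) j) with hg'
  set h' : Fin n → ℝ := fun j => -((x' ᵥ* R) j) with hh'
  set M := Finset.univ.sup' Finset.univ_nonempty g with hMdef
  set S := (argmaxFin g).sup' (argmaxFin_nonempty g) h with hSdef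
  set M' := Finset.univ.sup' Finset.univ_nonempty g' with hM'def
  set S' := (argmaxFin g').sup' (argmaxFin_nonempty g') h' with hS'def
  -- identify the sSup/sInf terms
  have hsetr : BRr R 0 y = ↑(argmaxFin g) := by
    ext i
    simp only [BRr, Set.mem_setOf_eq, argmaxFin, Finset.coe_filter, Finset.mem_univ, true_and,
      hg, add_zero]
  have hBRr : sSup ((fun i => (R *ᵥ y') i) '' BRr R 0 y) = S := by
    rw [hsetr]
    exact (Finset.sup'_eq_csSup_image _ (argmaxFin_nonempty g) h).symm
  have hsetc : BRc R 0 x = ↑(argmaxFin g') := by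
    ext j
    simp only [BRc, Set.mem_setOf_eq, argmaxFin, Finset.coe_filter, Finset.mem_univ, true_and,
      hg', add_zero]
    constructor
    · intro hj k; have := hj k; linarith
    · intro hj k; have := hj k; linarith
  have hBRc : sInf ((fun j => (x' ᵥ* R) j) '' BRc R 0 x) = -S' := by
    rw [hsetc]
    have : (fun j => (x' ᵥ* R) j) = fun j => - h' j := by
      funext j; simp [hh']
    rw [this, ← Finset.inf'_eq_csInf_image _ (argmaxFin_nonempty g'),
      inf'_neg (argmaxFin_nonempty g') h', hS'def]
  have hVz : V R x y = M + M' := by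
    simp only [V, hMdef, hM'def]
    have : (fun j => (x ᵥ* R) j) = fun j => - g' j := by
      funext j; simp [hg']
    rw [this, inf'_neg Finset.univ_nonempty g']
    ring
  have hgoal : dirDeriv R 0 x y x' y' = S + S' - (M + M') := by
    simp only [dirDeriv, hBRr, hBRc, hVz]; ring
  rw [hgoal]
  have hsupev := key_sup (n := n) g h
  have hsupev' := key_sup (n := n) g' h'
  rw [← hMdef, ← hSdef] at hsupev
  rw [← hM'def, ← hS'def] at hsupev'
  have hevent : ∀ᶠ ε in nhdsWithin (0:ℝ) (Set.Ioi 0),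
      (V R ((1 - ε) • x + ε • x') ((1 - ε) • y + ε • y') - V R x y) / ε
        = S + S' - (M + M') := by
    filter_upwards [hsupev, hsupev', self_mem_nhdsWithin] with ε hsup hsup' hε
    have hεpos : (0:ℝ) < ε := Set.mem_Ioi.mp hε
    have hVnum : V R ((1 - ε) • x + ε • x') ((1 - ε) • y + ε • y')
        = ((1-ε) * M + ε * S) + ((1-ε) * M' + ε * S') := by
      simp only [V]
      have e1 : (fun i => (R *ᵥ ((1 - ε) • y + ε • y')) i)
          = fun i => (1-ε) * g i + ε * h i := by
        funext i
        simp [Matrix.mulVec_add, Matrix.mulVec_smul, hg, hh, smul_eq_mul]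
      have e2 : (fun j => (((1 - ε) • x + ε • x') ᵥ* R) j)
          = fun j => -((1-ε) * g' j + ε * h' j) := by
        funext j
        simp only [Matrix.add_vecMul, Matrix.smul_vecMul, hg', hh', Pi.add_apply,
          Pi.smul_apply, smul_eq_mul]
        ring
      rw [e1, e2, hsup, inf'_neg Finset.univ_nonempty (fun j => (1-ε) * g' j + ε * h' j),
        hsup']
      ring
    rw [hVnum, hVz]
    field_simp
    ring
  exact Filter.Tendsto.congr' (Filter.EventuallyEq.symm hevent) tendsto_const_nhds
end

section
/- If the profile z = (x,y) is not a δ-Nash equilibrium for some δ ∈ [0,1], then the minimum over directions z' ∈ Δ^{n-1}×Δ^{n-1} of the ρ-directional derivative ∇_{ρ,z'}V(z) is strictly less than −δ. -/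
open Matrix Finset

variable {n : ℕ}

/-- δ-approximate Nash equilibrium of the zero-sum game (R, -R). -/
def isApproxNE (R : Matrix (Fin n) (Fin n) ℝ) (δ : ℝ) (x y : Fin n → ℝ) : Prop :=
  (∀ i, (R *ᵥ y) i ≤ x ⬝ᵥ (R *ᵥ y) + δ) ∧ (∀ j, x ⬝ᵥ (R *ᵥ y) - δ ≤ (x ᵥ* R) j)

/-- Approximate minimax theorem via Hahn-Banach separation. -/
lemma approx_minimax [NeZero n] (R : Matrix (Fin n) (Fin n) ℝ)
    (hR : ∀ i j, R i j ∈ Set.Icc (0:ℝ) 1) {ε : ℝ} (hε : 0 < ε) :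
    ∃ xs ys, xs ∈ stdSimplex ℝ (Fin n) ∧ ys ∈ stdSimplex ℝ (Fin n) ∧
      ∃ v : ℝ, (∀ i, (R *ᵥ ys) i ≤ v + ε) ∧ (∀ j, v ≤ (xs ᵥ* R) j) := by
  have hn : 0 < n := Nat.pos_of_ne_zero (NeZero.ne n)
  have i0 : Fin n := ⟨0, hn⟩
  -- nonnegativity of R *ᵥ y on the simplex
  have hmul_nonneg : ∀ y ∈ stdSimplex ℝ (Fin n), ∀ i, 0 ≤ (R *ᵥ y) i := by
    intro y hy i
    simp only [Matrix.mulVec, dotProduct]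
    exact Finset.sum_nonneg fun k _ => mul_nonneg (hR i k).1 (hy.1 k)
  set S : Set ℝ :=
      (fun y => Finset.univ.sup' Finset.univ_nonempty fun i => (R *ᵥ y) i) ''
        stdSimplex ℝ (Fin n) with hS
  have hSne : S.Nonempty := ⟨_, ⟨Pi.single i0 1, single_mem_stdSimplex ℝ i0, rfl⟩⟩
  have hSbdd : BddBelow S := by
    refine ⟨0, fun a ha => ?_⟩
    obtain ⟨y, hy, rfl⟩ := ha
    exact le_trans (hmul_nonneg y hy i0) (Finset.le_sup' _ (mem_univ i0))
  set v : ℝ := sInf S with hv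
  -- the two convex sets
  set A : Set (Fin n → ℝ) := {u | ∀ i, u i < v} with hA
  set B : Set (Fin n → ℝ) :=
      {u | ∃ y ∈ stdSimplex ℝ (Fin n), ∀ i, (R *ᵥ y) i ≤ u i} with hB
  have hAopen : IsOpen A := by
    have : A = ⋂ i, (fun u : Fin n → ℝ => u i) ⁻¹' Set.Iio v := by
      ext u; simp [hA, Set.mem_iInter]
    rw [this]
    exact isOpen_iInter_of_finite fun i => (continuous_apply i).isOpen_preimage _ isOpen_Iio
  have hAconv : Convex ℝ A := by
    have : A = ⋂ i, {u : Fin n → ℝ | u i < v} := by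
      ext u; simp [hA, Set.mem_iInter]
    rw [this]
    exact convex_iInter fun i =>
      convex_halfSpace_lt ⟨fun a b => rfl, fun c a => rfl⟩ v
  have hBconv : Convex ℝ B := by
    rintro u1 ⟨y1, hy1, h1⟩ u2 ⟨y2, hy2, h2⟩ a b ha hb hab
    refine ⟨a • y1 + b • y2, convex_stdSimplex ℝ (Fin n) hy1 hy2 ha hb hab, fun i => ?_⟩
    have : (R *ᵥ (a • y1 + b • y2)) i = a * (R *ᵥ y1) i + b * (R *ᵥ y2) i := by
      simp [Matrix.mulVec_add, Matrix.mulVec_smul]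
    rw [this]
    have := add_le_add (mul_le_mul_of_nonneg_left (h1 i) ha)
      (mul_le_mul_of_nonneg_left (h2 i) hb)
    simpa using this
  have hdisj : Disjoint A B := by
    rw [Set.disjoint_left]
    rintro u hu ⟨y, hy, hyu⟩
    have hmem : (Finset.univ.sup' Finset.univ_nonempty fun i => (R *ᵥ y) i) ∈ S :=
      ⟨y, hy, rfl⟩
    have hlt : (Finset.univ.sup' Finset.univ_nonempty fun i => (R *ᵥ y) i) < v := by
      rw [Finset.sup'_lt_iff]
      intro i _
      exact lt_of_le_of_lt (hyu i) (hu i)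
    exact absurd (csInf_le hSbdd hmem) (not_le_of_gt hlt)
  obtain ⟨f, s, hfA, hfB⟩ := geometric_hahn_banach_open hAconv hAopen hBconv hdisj
  set w : Fin n → ℝ := fun k => f (Pi.single k 1) with hw
  have hf : ∀ u : Fin n → ℝ, f u = ∑ k, u k * w k := by
    intro u
    have hu : u = ∑ k, u k • (Pi.single k 1 : Fin n → ℝ) := by
      funext j
      simp [Finset.sum_apply, Pi.single_apply, mul_comm]
    calc f u = f (∑ k, u k • (Pi.single k 1 : Fin n → ℝ)) := by rw [← hu]
      _ = ∑ k, u k * w k := by rw [map_sum]; simp [hw]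
  -- membership test elements
  have hc0A : ∀ t : ℝ, 0 < t → ((fun _ : Fin n => v - t) : Fin n → ℝ) ∈ A := by
    intro t ht i; simpa [hA] using ht
  -- w is nonnegative
  have hwnn : ∀ k, 0 ≤ w k := by
    intro k
    by_contra hk
    push_neg at hk
    set c0 : Fin n → ℝ := fun _ => v - 1 with hc0
    have hfc0 : f c0 < s := hfA c0 (hc0A 1 one_pos)
    set t : ℝ := (s + 1 - f c0) / (-w k) with ht
    have htpos : 0 < t := div_pos (by linarith) (by linarith)
    have hmemA : c0 - t • (Pi.single k 1 : Fin n → ℝ) ∈ A := by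
      intro i
      simp only [Pi.sub_apply, Pi.smul_apply, Pi.single_apply, smul_eq_mul, hc0]
      by_cases h : i = k
      · rw [if_pos h]; nlinarith
      · rw [if_neg h]; nlinarith
    have hval : f (c0 - t • (Pi.single k 1 : Fin n → ℝ)) = f c0 - t * w k := by
      rw [map_sub, ContinuousLinearMap.map_smul]; simp [hw]
    have h2 : -w k ≠ 0 := ne_of_gt (by linarith)
    have htw : t * w k = -(s + 1 - f c0) := by
      have hdc := div_mul_cancel₀ (s + 1 - f c0) h2
      calc t * w k = -(t * -w k) := by ring
        _ = -(s + 1 - f c0) := by rw [ht, hdc]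
    have := hfA _ hmemA
    rw [hval, htw] at this
    linarith
  -- B is nonempty
  have hu0B : (R *ᵥ Pi.single i0 1) ∈ B := ⟨Pi.single i0 1, single_mem_stdSimplex ℝ i0,
    fun i => le_rfl⟩
  -- the sum of w is positive
  set σ : ℝ := ∑ k, w k with hσ
  have hσnn : 0 ≤ σ := Finset.sum_nonneg fun k _ => hwnn k
  have hσpos : 0 < σ := by
    rcases lt_or_eq_of_le hσnn with h | h
    · exact h
    · exfalso
      have hall : ∀ k ∈ Finset.univ, w k = 0 :=
        (Finset.sum_eq_zero_iff_of_nonneg fun k _ => hwnn k).1 h.symm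
      have hf0 : ∀ u : Fin n → ℝ, f u = 0 := by
        intro u; rw [hf]; exact Finset.sum_eq_zero fun k _ => by
          rw [hall k (mem_univ k), mul_zero]
      have h1 : (0:ℝ) < s := by
        have := hfA _ (hc0A 1 one_pos); rwa [hf0] at this
      have h2 : s ≤ 0 := by
        have := hfB _ hu0B; rwa [hf0] at this
      linarith
  -- v * σ ≤ s
  have hvσ : v * σ ≤ s := by
    by_contra h
    push_neg at h
    set ε' : ℝ := (v * σ - s) / σ with hε'
    have hε'pos : 0 < ε' := div_pos (by linarith) hσpos
    have := hfA _ (hc0A ε' hε'pos)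
    rw [hf] at this
    have hcalc : ∑ k, (v - ε') * w k = (v - ε') * σ := by
      rw [← Finset.mul_sum]
    rw [hcalc] at this
    have : v * σ - ε' * σ < s := by linarith [this]
    have hε'σ : ε' * σ = v * σ - s := by
      rw [hε']; field_simp
    linarith
  -- get ys from the infimum
  have hex : ∃ a ∈ S, a < v + ε := by
    have : sInf S < v + ε := by rw [← hv]; linarith
    exact (csInf_lt_iff hSbdd hSne).1 this
  obtain ⟨a, ⟨ys, hys, rfl⟩, ha⟩ := hex
  refine ⟨σ⁻¹ • w, ys, ⟨fun k => mul_nonneg (inv_nonneg.2 hσnn) (hwnn k), ?_⟩,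
    hys, v, ?_, ?_⟩
  · simp only [Pi.smul_apply, smul_eq_mul, ← Finset.mul_sum, ← hσ]
    field_simp
  · intro i
    exact le_of_lt (lt_of_le_of_lt (Finset.le_sup' _ (mem_univ i)) ha)
  · intro j
    have hcolB : (fun k => R k j) ∈ B := by
      refine ⟨Pi.single j 1, single_mem_stdSimplex ℝ j, fun i => ?_⟩
      simp [Matrix.mulVec_single]
    have hsf : s ≤ f fun k => R k j := hfB _ hcolB
    rw [hf] at hsf
    have hval : ((σ⁻¹ • w) ᵥ* R) j = σ⁻¹ * ∑ k, R k j * w k := by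
      simp only [Matrix.vecMul, dotProduct, Pi.smul_apply, smul_eq_mul,
        Finset.mul_sum]
      congr 1; funext k; ring
    rw [hval]
    rw [← mul_le_mul_iff_right₀ hσpos]
    calc σ * v = v * σ := mul_comm _ _
      _ ≤ s := hvσ
      _ ≤ ∑ k, R k j * w k := hsf
      _ = σ * (σ⁻¹ * ∑ k, R k j * w k) := by field_simp


/-- If (x,y) is not a δ-Nash equilibrium, then the minimum of the
ρ-directional derivative over directions is < −δ, i.e. some direction in the
product of simplices has ρ-directional derivative < −δ. -/
theorem exists_dirDeriv_rho_lt [NeZero n] (R : Matrix (Fin n) (Fin n) ℝ)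
    (hR : ∀ i j, R i j ∈ Set.Icc (0:ℝ) 1)
    (ρ : ℝ) (hρ : 0 < ρ) (δ : ℝ) (hδ : δ ∈ Set.Icc (0:ℝ) 1)
    (x y : Fin n → ℝ)
    (hx : x ∈ stdSimplex ℝ (Fin n)) (hy : y ∈ stdSimplex ℝ (Fin n))
    (hnot : ¬ isApproxNE R δ x y) :
    ∃ x' y', x' ∈ stdSimplex ℝ (Fin n) ∧ y' ∈ stdSimplex ℝ (Fin n) ∧
      dirDeriv R ρ x y x' y' < -δ := by
  set sup1 : ℝ := Finset.univ.sup' Finset.univ_nonempty fun i => (R *ᵥ y) i with hsup1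
  set inf1 : ℝ := Finset.univ.inf' Finset.univ_nonempty fun j => (x ᵥ* R) j with hinf1
  -- inf1 ≤ x ⬝ᵥ R y ≤ sup1
  have hle1 : inf1 ≤ x ⬝ᵥ (R *ᵥ y) := by
    rw [Matrix.dotProduct_mulVec]
    have : (x ᵥ* R) ⬝ᵥ y = ∑ j, (x ᵥ* R) j * y j := rfl
    rw [this]
    calc inf1 = ∑ j, inf1 * y j := by
          rw [← Finset.mul_sum, hy.2, mul_one]
      _ ≤ ∑ j, (x ᵥ* R) j * y j :=
          Finset.sum_le_sum fun j _ =>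
            mul_le_mul_of_nonneg_right (Finset.inf'_le _ (mem_univ j)) (hy.1 j)
  have hle2 : x ⬝ᵥ (R *ᵥ y) ≤ sup1 := by
    have : x ⬝ᵥ (R *ᵥ y) = ∑ i, x i * (R *ᵥ y) i := rfl
    rw [this]
    calc ∑ i, x i * (R *ᵥ y) i ≤ ∑ i, x i * sup1 :=
          Finset.sum_le_sum fun i _ =>
            mul_le_mul_of_nonneg_left (Finset.le_sup' _ (mem_univ i)) (hx.1 i)
      _ = sup1 := by rw [← Finset.sum_mul, hx.2, one_mul]
  -- V > δ
  have hV : δ < V R x y := by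
    rw [isApproxNE, not_and_or] at hnot
    rcases hnot with h | h
    · push_neg at h
      obtain ⟨i, hi⟩ := h
      have : (R *ᵥ y) i ≤ sup1 := Finset.le_sup' _ (mem_univ i)
      have hVeq : V R x y = sup1 - inf1 := rfl
      rw [hVeq]; linarith
    · push_neg at h
      obtain ⟨j, hj⟩ := h
      have : inf1 ≤ (x ᵥ* R) j := Finset.inf'_le _ (mem_univ j)
      have hVeq : V R x y = sup1 - inf1 := rfl
      rw [hVeq]; linarith
  set ε : ℝ := (V R x y - δ) / 2 with hε
  have hεpos : 0 < ε := by rw [hε]; linarith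
  obtain ⟨xs, ys, hxs, hys, v, hv1, hv2⟩ := approx_minimax R hR hεpos
  refine ⟨xs, ys, hxs, hys, ?_⟩
  -- nonemptiness of the best-response sets
  obtain ⟨imax, _, himax⟩ := Finset.exists_max_image Finset.univ
    (fun i => (R *ᵥ y) i) Finset.univ_nonempty
  have hBRr : imax ∈ BRr R ρ y := fun k =>
    le_trans (himax k (mem_univ k)) (by linarith)
  obtain ⟨jmin, _, hjmin⟩ := Finset.exists_min_image Finset.univ
    (fun j => (x ᵥ* R) j) Finset.univ_nonempty
  have hBRc : jmin ∈ BRc R ρ x := fun k =>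
    le_trans (hjmin k (mem_univ k)) (by linarith)
  have hsSup : sSup ((fun i => (R *ᵥ ys) i) '' BRr R ρ y) ≤ v + ε := by
    apply csSup_le (Set.Nonempty.image _ ⟨imax, hBRr⟩)
    rintro a ⟨i, _, rfl⟩
    exact hv1 i
  have hsInf : v ≤ sInf ((fun j => (xs ᵥ* R) j) '' BRc R ρ x) := by
    apply le_csInf (Set.Nonempty.image _ ⟨jmin, hBRc⟩)
    rintro a ⟨j, _, rfl⟩
    exact hv2 j
  have : dirDeriv R ρ x y xs ys =
      sSup ((fun i => (R *ᵥ ys) i) '' BRr R ρ y) -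
      sInf ((fun j => (xs ᵥ* R) j) '' BRc R ρ x) - V R x y := rfl
  rw [this]
  have : V R x y - δ = 2 * ε := by rw [hε]; ring
  linarith
end

section
/- If z = (x,y) is not a δ-Nash equilibrium for some δ ∈ [0,1], then there exists a direction z' ∈ Δ^{n-1}×Δ^{n-1} such that the (exact) directional derivative satisfies ∇_{z'}V(z) < −δ. In particular, taking z' to be a Nash equilibrium (x*,y*) works. -/
open Matrix Finset

variable {n : ℕ}

/-- Nash equilibrium of the zero-sum game (R, -R). -/
def isNE (R : Matrix (Fin n) (Fin n) ℝ) (x y : Fin n → ℝ) : Prop :=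
  (∀ i, (R *ᵥ y) i ≤ x ⬝ᵥ (R *ᵥ y)) ∧ (∀ j, x ⬝ᵥ (R *ᵥ y) ≤ (x ᵥ* R) j)

lemma dot_le_sup [NeZero n] (w x : Fin n → ℝ) (hx : x ∈ stdSimplex ℝ (Fin n)) :
    x ⬝ᵥ w ≤ Finset.univ.sup' Finset.univ_nonempty w := by
  calc x ⬝ᵥ w = ∑ i, x i * w i := rfl
  _ ≤ ∑ i, x i * (univ.sup' univ_nonempty w) := by
      refine Finset.sum_le_sum fun i _ => ?_
      exact mul_le_mul_of_nonneg_left (Finset.le_sup' w (mem_univ i)) (hx.1 i)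
  _ = _ := by rw [← Finset.sum_mul, hx.2, one_mul]

lemma inf_le_dot [NeZero n] (w x : Fin n → ℝ) (hx : x ∈ stdSimplex ℝ (Fin n)) :
    Finset.univ.inf' Finset.univ_nonempty w ≤ x ⬝ᵥ w := by
  have h : ∑ i, x i * (univ.inf' univ_nonempty w) ≤ ∑ i, x i * w i := by
    refine Finset.sum_le_sum fun i _ => ?_
    exact mul_le_mul_of_nonneg_left (Finset.inf'_le w (mem_univ i)) (hx.1 i)
  calc univ.inf' univ_nonempty w = ∑ i, x i * (univ.inf' univ_nonempty w) := by
        rw [← Finset.sum_mul, hx.2, one_mul]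
  _ ≤ ∑ i, x i * w i := h
  _ = x ⬝ᵥ w := rfl

lemma exists_NE [NeZero n] (R : Matrix (Fin n) (Fin n) ℝ) :
    ∃ xs ys, xs ∈ stdSimplex ℝ (Fin n) ∧ ys ∈ stdSimplex ℝ (Fin n) ∧ isNE R xs ys := by
  classical
  -- minimize the max payoff over the simplex
  set g : (Fin n → ℝ) → ℝ := fun y => Finset.univ.sup' Finset.univ_nonempty (fun i => (R *ᵥ y) i)
    with hg
  have hgc : Continuous g := by
    rw [continuous_iff_continuousAt]
    intro y
    refine ContinuousAt.finset_sup'_apply Finset.univ_nonempty fun i _ => ?_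
    have : Continuous fun y : Fin n → ℝ => (R *ᵥ y) i := by
      simp only [Matrix.mulVec, dotProduct]
      exact continuous_finset_sum _ fun j _ => continuous_const.mul (continuous_apply j)
    exact this.continuousAt
  obtain ⟨ys, hys, hmin⟩ := isCompact_stdSimplex ℝ (Fin n) |>.exists_isMinOn
    ⟨_, single_mem_stdSimplex ℝ (0 : Fin n)⟩ hgc.continuousOn
  set v : ℝ := g ys with hv
  have hle : ∀ i, (R *ᵥ ys) i ≤ v := fun i => Finset.le_sup' _ (mem_univ i)
  -- separation
  set A : Set (Fin n → ℝ) := (fun y => R *ᵥ y) '' stdSimplex ℝ (Fin n) with hA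
  set B : Set (Fin n → ℝ) := Set.univ.pi (fun _ : Fin n => Set.Iio v) with hB
  have hAc : Convex ℝ A := by
    have := (convex_stdSimplex ℝ (Fin n)).is_linear_image (Matrix.mulVecLin R).isLinear
    exact this
  have hBc : Convex ℝ B := convex_pi (fun i _ => convex_Iio v)
  have hBo : IsOpen B := isOpen_set_pi Set.finite_univ (fun i _ => isOpen_Iio)
  have hdisj : Disjoint B A := by
    rw [Set.disjoint_left]
    rintro z hz ⟨y', hy', rfl⟩
    have h1 : g y' < v := by
      rw [hg]
      exact (Finset.sup'_lt_iff _).2 fun i _ => hz i (Set.mem_univ i)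
    exact absurd (hmin hy') (by simpa [hv] using not_le.2 h1)
  obtain ⟨f, s, hfB, hfA⟩ := geometric_hahn_banach_open hBc hBo hAc hdisj
  set c : Fin n → ℝ := fun i => f (Pi.single i 1) with hc
  have hf_eq : ∀ z : Fin n → ℝ, f z = ∑ i, z i * c i := by
    intro z
    conv_lhs => rw [← Finset.univ_sum_single z]
    rw [map_sum]
    refine Finset.sum_congr rfl fun i _ => ?_
    have : (Pi.single i (z i) : Fin n → ℝ) = z i • (Pi.single i 1 : Fin n → ℝ) := by
      ext j
      rcases eq_or_ne j i with rfl | h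
      · simp
      · simp [Pi.single_eq_of_ne h]
    rw [this, _root_.map_smul, smul_eq_mul, hc]
  have key : ∀ (i : Fin n) (t : ℝ),
      f (fun j => if j = i then v - 1 - t else v - 1) = (∑ j, (v-1) * c j) - t * c i := by
    intro i t
    rw [hf_eq]
    have h1 : ∀ j : Fin n, (if j = i then v-1-t else v-1) * c j
        = (v-1) * c j - (if j = i then t * c i else 0) := by
      intro j
      rcases eq_or_ne j i with rfl | h
      · simp; ring
      · simp [h]
    simp only [h1, Finset.sum_sub_distrib, Finset.sum_ite_eq' univ i (fun _ => t * c i),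
      mem_univ, if_true]
  have hcnn : ∀ i, 0 ≤ c i := by
    intro i
    by_contra hci
    push_neg at hci
    set K : ℝ := ((∑ j, (v-1) * c j) - s) / c i with hK
    set t : ℝ := max 0 K with ht
    have hzB : (fun j => if j = i then v - 1 - t else v - 1) ∈ B := by
      rw [hB, Set.mem_univ_pi]
      intro j
      simp only [Set.mem_Iio]
      split
      · have := le_max_left (0:ℝ) K; linarith
      · linarith
    have hlt := hfB _ hzB
    rw [key i t] at hlt
    have h2 : t < K := by
      rw [hK, lt_div_iff_of_neg hci]
      linarith
    have := le_max_right (0:ℝ) K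
    linarith
  set σ : ℝ := ∑ i, c i with hσ
  have hσnn : 0 ≤ σ := Finset.sum_nonneg fun i _ => hcnn i
  have hσpos : 0 < σ := by
    rcases lt_or_eq_of_le hσnn with h | h
    · exact h
    · exfalso
      have hall : ∀ i, c i = 0 := by
        intro i
        have := (Finset.sum_eq_zero_iff_of_nonneg (fun i _ => hcnn i)).1 h.symm i (mem_univ i)
        exact this
      have hf0 : ∀ z : Fin n → ℝ, f z = 0 := by
        intro z; rw [hf_eq]; simp [hall]
      have h1 : ((fun _ => v - 1 : Fin n → ℝ)) ∈ B := by
        rw [hB, Set.mem_univ_pi]; intro j; simp only [Set.mem_Iio]; linarith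
      have h2 := hfB _ h1
      have h3 := hfA _ ⟨Pi.single 0 1, single_mem_stdSimplex ℝ (0 : Fin n), rfl⟩
      rw [hf0] at h2 h3
      linarith
  have hconst : ∀ w : ℝ, f (fun _ => w) = w * σ := by
    intro w; rw [hf_eq, hσ, Finset.mul_sum]
  have hvs : v * σ ≤ s := by
    by_contra h
    push_neg at h
    set ε : ℝ := (v * σ - s) / (2 * σ) with hε
    have hεpos : 0 < ε := div_pos (by linarith) (by linarith)
    have h1 : ((fun _ => v - ε : Fin n → ℝ)) ∈ B := by
      rw [hB, Set.mem_univ_pi]; intro j; simp only [Set.mem_Iio]; linarith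
    have h2 := hfB _ h1
    rw [hconst] at h2
    have hεσ : ε * σ = (v * σ - s) / 2 := by
      rw [hε]; field_simp
    nlinarith
  set xs : Fin n → ℝ := fun i => c i / σ with hxsdef
  have hxs : xs ∈ stdSimplex ℝ (Fin n) := by
    constructor
    · intro i; exact div_nonneg (hcnn i) hσnn
    · rw [hxsdef]; simp only [← Finset.sum_div]; rw [← hσ, div_self hσpos.ne']
  have key2 : ∀ y ∈ stdSimplex ℝ (Fin n), v ≤ xs ⬝ᵥ (R *ᵥ y) := by
    intro y hy
    have h1 := hfA _ ⟨y, hy, rfl⟩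
    rw [hf_eq] at h1
    have h2 : xs ⬝ᵥ (R *ᵥ y) = (∑ i, (R *ᵥ y) i * c i) / σ := by
      simp only [dotProduct, hxsdef, Finset.sum_div]
      exact Finset.sum_congr rfl fun i _ => by ring
    rw [h2, le_div_iff₀ hσpos]
    calc v * σ ≤ s := hvs
    _ ≤ _ := h1
  refine ⟨xs, ys, hxs, hys, ?_, ?_⟩
  · intro i
    exact (hle i).trans (key2 ys hys)
  · intro j
    have h1 : xs ⬝ᵥ (R *ᵥ ys) ≤ v := dot_le_sup _ _ hxs
    have h2 : (xs ᵥ* R) j = xs ⬝ᵥ (R *ᵥ Pi.single j 1) := by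
      simp [Matrix.vecMul, Matrix.mulVec_single, dotProduct]
    rw [h2]
    exact h1.trans (key2 _ (single_mem_stdSimplex ℝ j))


/-- If (x,y) is not a δ-Nash equilibrium, there is a direction whose
exact directional derivative is < −δ; in particular any Nash equilibrium works
as such a direction. -/
theorem exists_dirDeriv_lt [NeZero n] (R : Matrix (Fin n) (Fin n) ℝ)
    (hR : ∀ i j, R i j ∈ Set.Icc (0:ℝ) 1)
    (δ : ℝ) (hδ : δ ∈ Set.Icc (0:ℝ) 1)
    (x y : Fin n → ℝ)
    (hx : x ∈ stdSimplex ℝ (Fin n)) (hy : y ∈ stdSimplex ℝ (Fin n))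
    (hnot : ¬ isApproxNE R δ x y) :
    (∃ x' y', x' ∈ stdSimplex ℝ (Fin n) ∧ y' ∈ stdSimplex ℝ (Fin n) ∧
        dirDeriv R 0 x y x' y' < -δ) ∧
    (∀ xs ys, xs ∈ stdSimplex ℝ (Fin n) → ys ∈ stdSimplex ℝ (Fin n) →
        isNE R xs ys → dirDeriv R 0 x y xs ys < -δ) := by
  have hV : δ < V R x y := by
    rw [isApproxNE, not_and_or] at hnot
    have hsup : x ⬝ᵥ (R *ᵥ y) ≤ Finset.univ.sup' Finset.univ_nonempty (fun i => (R *ᵥ y) i) :=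
      dot_le_sup _ _ hx
    have hinf : Finset.univ.inf' Finset.univ_nonempty (fun j => (x ᵥ* R) j) ≤ x ⬝ᵥ (R *ᵥ y) := by
      have := inf_le_dot (fun j => (x ᵥ* R) j) y hy
      rwa [Matrix.dotProduct_mulVec, dotProduct_comm]
    rcases hnot with h | h
    · push_neg at h
      obtain ⟨i, hi⟩ := h
      have h1 : (R *ᵥ y) i ≤ Finset.univ.sup' Finset.univ_nonempty (fun i => (R *ᵥ y) i) :=
        Finset.le_sup' _ (mem_univ i)
      rw [V]
      linarith
    · push_neg at h
      obtain ⟨j, hj⟩ := h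
      have h1 : Finset.univ.inf' Finset.univ_nonempty (fun j => (x ᵥ* R) j) ≤ (x ᵥ* R) j :=
        Finset.inf'_le _ (mem_univ j)
      rw [V]
      linarith
  have main : ∀ xs ys, xs ∈ stdSimplex ℝ (Fin n) → ys ∈ stdSimplex ℝ (Fin n) →
      isNE R xs ys → dirDeriv R 0 x y xs ys < -δ := by
    intro xs ys hxs hys hNE
    set v : ℝ := xs ⬝ᵥ (R *ᵥ ys) with hv
    have hv0 : 0 ≤ v := by
      refine Finset.sum_nonneg fun i _ => mul_nonneg (hxs.1 i) ?_
      exact Finset.sum_nonneg (fun j _ => mul_nonneg (hR i j).1 (hys.1 j) : ∀ j ∈ univ, 0 ≤ R i j * ys j)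
    have hsSup : sSup ((fun i => (R *ᵥ ys) i) '' BRr R 0 y) ≤ v := by
      refine Real.sSup_le ?_ hv0
      rintro _ ⟨i, -, rfl⟩
      exact hNE.1 i
    have hne : ((fun j => (xs ᵥ* R) j) '' BRc R 0 x).Nonempty := by
      obtain ⟨j0, -, hj0⟩ := Finset.exists_min_image univ (fun j => (x ᵥ* R) j) univ_nonempty
      exact ⟨_, ⟨j0, fun k => by simpa using hj0 k (mem_univ k), rfl⟩⟩
    have hsInf : v ≤ sInf ((fun j => (xs ᵥ* R) j) '' BRc R 0 x) := by
      refine le_csInf hne ?_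
      rintro _ ⟨j, -, rfl⟩
      exact hNE.2 j
    rw [dirDeriv]
    linarith
  obtain ⟨xs, ys, hxs, hys, hNE⟩ := exists_NE R
  exact ⟨⟨xs, ys, hxs, hys, main xs ys hxs hys hNE⟩, main⟩
end

section
/- Let ρ ∈ (0,1] and ε ≤ ρ/2. For any y, y' ∈ Δ^{n-1}, if the set of strategies outside BR_r^ρ(y) is nonempty, then max over i not in BR_r^ρ(y) of e_i^T R ((1−ε)y + εy') is at most max over i in BR_r^ρ(y) of e_i^T R ((1−ε)y + εy'). In other words, after a step of size ε ≤ ρ/2, no strategy outside the ρ-best-response set can become the overall best response. -/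
open Matrix Finset

variable {n : ℕ}

lemma mulVec_mem_Icc (R : Matrix (Fin n) (Fin n) ℝ)
    (hR : ∀ i j, R i j ∈ Set.Icc (0:ℝ) 1)
    {w : Fin n → ℝ} (hw : w ∈ stdSimplex ℝ (Fin n)) (i : Fin n) :
    (R *ᵥ w) i ∈ Set.Icc (0:ℝ) 1 := by
  obtain ⟨hw0, hw1⟩ := hw
  constructor
  · exact Finset.sum_nonneg (s := Finset.univ) fun j _ => mul_nonneg (hR i j).1 (hw0 j)
  · calc (R *ᵥ w) i = ∑ j, R i j * w j := rfl
      _ ≤ ∑ j, 1 * w j :=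
        Finset.sum_le_sum fun j _ => mul_le_mul_of_nonneg_right (hR i j).2 (hw0 j)
      _ = 1 := by simp [hw1]

/-- After a step of size ε ≤ ρ/2, no row strategy outside the
ρ-best-response set can beat the strategies inside it. -/
theorem step_preserves_row_best_responses [NeZero n] (R : Matrix (Fin n) (Fin n) ℝ)
    (hR : ∀ i j, R i j ∈ Set.Icc (0:ℝ) 1)
    (ρ : ℝ) (hρ : ρ ∈ Set.Ioc (0:ℝ) 1)
    (ε : ℝ) (hε : 0 < ε) (hερ : ε ≤ ρ / 2)
    (y y' : Fin n → ℝ)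
    (hy : y ∈ stdSimplex ℝ (Fin n)) (hy' : y' ∈ stdSimplex ℝ (Fin n))
    (hne : ((BRr R ρ y)ᶜ).Nonempty) :
    sSup ((fun i => (R *ᵥ ((1 - ε) • y + ε • y')) i) '' (BRr R ρ y)ᶜ) ≤
      sSup ((fun i => (R *ᵥ ((1 - ε) • y + ε • y')) i) '' BRr R ρ y) := by
  have hn : 0 < n := Nat.pos_of_ne_zero (NeZero.ne n)
  -- argmax of R *ᵥ y
  obtain ⟨i₀, -, hi₀⟩ := Finset.exists_max_image (Finset.univ : Finset (Fin n))
    (fun k => (R *ᵥ y) k) ⟨⟨0, hn⟩, Finset.mem_univ _⟩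
  have hi₀mem : i₀ ∈ BRr R ρ y := fun k =>
    le_add_of_le_of_nonneg (hi₀ k (Finset.mem_univ k)) hρ.1.le
  set z : Fin n → ℝ := (1 - ε) • y + ε • y' with hz
  have hlin : ∀ i, (R *ᵥ z) i = (1 - ε) * (R *ᵥ y) i + ε * (R *ᵥ y') i := by
    intro i
    simp [hz, Matrix.mulVec_add, Matrix.mulVec_smul]
  have hε1 : ε ≤ 1 / 2 := hερ.trans (by linarith [hρ.2])
  have key : ∀ i ∈ (BRr R ρ y)ᶜ, (R *ᵥ z) i ≤ (R *ᵥ z) i₀ := by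
    intro i hi
    simp only [Set.mem_compl_iff, BRr, Set.mem_setOf_eq, not_forall, not_le] at hi
    obtain ⟨k, hk⟩ := hi
    have h1 : (R *ᵥ y) i + ρ < (R *ᵥ y) i₀ :=
      hk.trans_le (hi₀ k (Finset.mem_univ k))
    have h2 := mulVec_mem_Icc R hR hy' i
    have h3 := mulVec_mem_Icc R hR hy' i₀
    rw [hlin, hlin]
    nlinarith [h2.1, h2.2, h3.1, hρ.1]
  have hBfin : ((fun i => (R *ᵥ z) i) '' BRr R ρ y).Finite :=
    (Set.toFinite _).image _
  have hi₀img : (R *ᵥ z) i₀ ∈ (fun i => (R *ᵥ z) i) '' BRr R ρ y :=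
    ⟨i₀, hi₀mem, rfl⟩
  refine csSup_le (hne.image _) ?_
  rintro a ⟨i, hi, rfl⟩
  exact (key i hi).trans (le_csSup hBfin.bddAbove hi₀img)
end

section
/- Let ρ ∈ (0,1] and ε ≤ ρ/2. For any x, x' ∈ Δ^{n-1}, if the complement of BR_c^ρ(x) is nonempty, then min over j not in BR_c^ρ(x) of ((1−ε)x + εx')^T R e_j is at least min over j in BR_c^ρ(x) of ((1−ε)x + εx')^T R e_j. -/
open Matrix Finset

variable {n : ℕ}

lemma vecMul_bounds [NeZero n] (R : Matrix (Fin n) (Fin n) ℝ)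
    (hR : ∀ i j, R i j ∈ Set.Icc (0:ℝ) 1)
    (z : Fin n → ℝ) (hz : z ∈ stdSimplex ℝ (Fin n)) (j : Fin n) :
    0 ≤ (z ᵥ* R) j ∧ (z ᵥ* R) j ≤ 1 := by
  have h1 : (z ᵥ* R) j = ∑ i, z i * R i j := rfl
  constructor
  · rw [h1]
    exact Finset.sum_nonneg fun i _ => mul_nonneg (hz.1 i) (hR i j).1
  · rw [h1]
    calc ∑ i, z i * R i j ≤ ∑ i, z i := by
          refine Finset.sum_le_sum fun i _ => ?_
          nlinarith [(hR i j).2, hz.1 i]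
      _ = 1 := hz.2

lemma vecMul_combo [NeZero n] (R : Matrix (Fin n) (Fin n) ℝ) (ε : ℝ)
    (x x' : Fin n → ℝ) (j : Fin n) :
    (((1 - ε) • x + ε • x') ᵥ* R) j = (1 - ε) * (x ᵥ* R) j + ε * (x' ᵥ* R) j := by
  simp [add_vecMul, smul_vecMul]


theorem step_preserves_col_best_responses [NeZero n] (R : Matrix (Fin n) (Fin n) ℝ)
    (hR : ∀ i j, R i j ∈ Set.Icc (0:ℝ) 1)
    (ρ : ℝ) (hρ : ρ ∈ Set.Ioc (0:ℝ) 1)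
    (ε : ℝ) (hε : 0 < ε) (hερ : ε ≤ ρ / 2)
    (x x' : Fin n → ℝ)
    (hx : x ∈ stdSimplex ℝ (Fin n)) (hx' : x' ∈ stdSimplex ℝ (Fin n))
    (hne : ((BRc R ρ x)ᶜ).Nonempty) :
    sInf ((fun j => ((((1 - ε) • x + ε • x')) ᵥ* R) j) '' BRc R ρ x) ≤
      sInf ((fun j => ((((1 - ε) • x + ε • x')) ᵥ* R) j) '' (BRc R ρ x)ᶜ) := by
  set y := (1 - ε) • x + ε • x' with hy
  set m := Finset.univ.inf' Finset.univ_nonempty (fun k => (x ᵥ* R) k) with hm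
  obtain ⟨j₀, -, hj₀⟩ := Finset.exists_mem_eq_inf' Finset.univ_nonempty (fun k => (x ᵥ* R) k)
  have hj₀BR : j₀ ∈ BRc R ρ x := by
    intro k
    have h1 : m ≤ (x ᵥ* R) k := Finset.inf'_le _ (Finset.mem_univ k)
    have h2 : m = (x ᵥ* R) j₀ := hj₀
    linarith [hρ.1]
  have hεhalf : ε ≤ 1 / 2 := by linarith [hρ.2]
  -- upper bound on value at j₀
  have hup : (y ᵥ* R) j₀ ≤ (1 - ε) * m + ε := by
    rw [vecMul_combo]
    have h1 := (vecMul_bounds R hR x' hx' j₀).2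
    have h2 : m = (x ᵥ* R) j₀ := hj₀
    rw [← h2]
    nlinarith
  -- lower bound on values outside BRc
  have hlow : ∀ j ∈ (BRc R ρ x)ᶜ, (1 - ε) * m + ε ≤ (y ᵥ* R) j := by
    intro j hj
    simp only [Set.mem_compl_iff, BRc, Set.mem_setOf_eq, not_forall, not_le] at hj
    obtain ⟨k, hk⟩ := hj
    have hmk : m ≤ (x ᵥ* R) k := Finset.inf'_le _ (Finset.mem_univ k)
    have hxj : m + ρ < (x ᵥ* R) j := by linarith
    rw [vecMul_combo]
    have h0 := (vecMul_bounds R hR x' hx' j).1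
    have hρ1 := hρ.1
    have hρ2 := hρ.2
    nlinarith
  have hfin : ((fun j => (y ᵥ* R) j) '' (BRc R ρ x)ᶜ).Finite := Set.toFinite _
  have hfin2 : ((fun j => (y ᵥ* R) j) '' (BRc R ρ x)).Finite := Set.toFinite _
  have h1 : sInf ((fun j => (y ᵥ* R) j) '' BRc R ρ x) ≤ (y ᵥ* R) j₀ :=
    csInf_le hfin2.bddBelow ⟨j₀, hj₀BR, rfl⟩
  have h2 : (1 - ε) * m + ε ≤ sInf ((fun j => (y ᵥ* R) j) '' (BRc R ρ x)ᶜ) := by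
    refine le_csInf (hne.image _) ?_
    rintro b ⟨j, hj, rfl⟩
    exact hlow j hj
  linarith
end

section
/- Suppose ε ≤ ρ/2 and the current profile (x,y) is not a δ-Nash equilibrium, and let (x',y') be a direction minimizing the ρ-directional derivative of V at (x,y). Then the profile (x⁺,y⁺) = ((1−ε)x + εx', (1−ε)y + εy') satisfies V(x⁺,y⁺) ≤ V(x,y) − ε·δ. -/
open Matrix Finset

variable {n : ℕ}

/-- Von Neumann's minimax theorem (existence of an exact equilibrium),
proved via the separating-hyperplane theorem. -/
theorem exists_minimax_aux [NeZero n] (R : Matrix (Fin n) (Fin n) ℝ) :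
    ∃ u v : Fin n → ℝ, u ∈ stdSimplex ℝ (Fin n) ∧ v ∈ stdSimplex ℝ (Fin n) ∧
      ∀ i j, (R *ᵥ v) i ≤ (u ᵥ* R) j := by
  have hne0 : (Finset.univ : Finset (Fin n)).Nonempty := Finset.univ_nonempty
  have hcomp : ∀ i : Fin n, Continuous fun v : Fin n → ℝ => (R *ᵥ v) i := by
    intro i
    simp only [Matrix.mulVec, dotProduct]
    exact continuous_finset_sum _ fun j _ => continuous_const.mul (continuous_apply j)
  set F : (Fin n → ℝ) → ℝ := fun v => Finset.univ.sup' hne0 fun i => (R *ᵥ v) i with hF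
  have hFc : Continuous F := by
    rw [continuous_iff_continuousAt]
    intro v
    exact ContinuousAt.finset_sup'_apply hne0 fun i _ => (hcomp i).continuousAt
  have hSne : (stdSimplex ℝ (Fin n)).Nonempty := ⟨Pi.single 0 1, single_mem_stdSimplex ℝ 0⟩
  obtain ⟨ystar, hystar, hminy⟩ :=
    (isCompact_stdSimplex ℝ (Fin n)).exists_isMinOn hSne hFc.continuousOn
  set w : ℝ := F ystar with hw
  set O : Set (Fin n → ℝ) := {z | ∀ i, z i < w} with hO
  set C : Set (Fin n → ℝ) := (fun v => R *ᵥ v) '' stdSimplex ℝ (Fin n) with hC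
  have hOeq : O = ⋂ i, {z : Fin n → ℝ | z i < w} := by
    ext z; simp [hO]
  have hOconv : Convex ℝ O := by
    rw [hOeq]
    exact convex_iInter fun i => convex_halfSpace_lt ⟨fun a b => rfl, fun c a => rfl⟩ w
  have hOopen : IsOpen O := by
    rw [hOeq]
    exact isOpen_iInter_of_finite fun i => isOpen_lt (continuous_apply i) continuous_const
  have hCconv : Convex ℝ C := by
    have h := (convex_stdSimplex ℝ (Fin n)).linear_image (Matrix.mulVecLin R)
    have he : ⇑(R.mulVecLin) = fun v => R *ᵥ v := funext fun v => Matrix.mulVecLin_apply R v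
    rwa [he] at h
  have hdisj : Disjoint O C := by
    rw [Set.disjoint_left]
    rintro z hz ⟨v, hv, rfl⟩
    obtain ⟨i, _, hi⟩ := Finset.exists_mem_eq_sup' hne0 fun i => (R *ᵥ v) i
    have h1 : w ≤ F v := isMinOn_iff.mp hminy v hv
    have h2 : (R *ᵥ v) i < w := hz i
    rw [hF] at h1
    simp only at h1
    rw [hi] at h1
    linarith
  obtain ⟨f, u, hfO, hfC⟩ := geometric_hahn_banach_open hOconv hOopen hCconv hdisj
  set g : Fin n → ℝ := fun i => f (Pi.single i 1) with hg
  have hfz : ∀ z : Fin n → ℝ, f z = ∑ i, z i * g i := by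
    intro z
    have hz : z = ∑ i, z i • (Pi.single i 1 : Fin n → ℝ) := by
      have h1 : ∀ i, z i • (Pi.single i 1 : Fin n → ℝ) = Pi.single i (z i) := fun i => by
        rw [← Pi.single_smul]; simp
      simp_rw [h1]
      exact (Finset.univ_sum_single z).symm
    conv_lhs => rw [hz]
    rw [map_sum]
    simp [hg, smul_eq_mul]
  set c0 : Fin n → ℝ := fun _ => w - 1 with hc0
  have hc0O : c0 ∈ O := fun i => by simp [hc0]
  have hfc0 : f c0 < u := hfO _ hc0O
  have hgnn : ∀ i, 0 ≤ g i := by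
    intro i
    by_contra hneg
    push_neg at hneg
    set t : ℝ := (u + 1 - f c0) / (-g i) with ht
    have htpos : 0 < t := div_pos (by linarith) (by linarith)
    have hmem : (c0 - t • (Pi.single i 1 : Fin n → ℝ)) ∈ O := by
      intro j
      simp only [Pi.sub_apply, Pi.smul_apply, smul_eq_mul, hc0]
      rcases eq_or_ne j i with h | h
      · subst h; simp; linarith
      · rw [Pi.single_apply]; simp [h]
    have hlt := hfO _ hmem
    rw [map_sub, _root_.map_smul, smul_eq_mul] at hlt
    have heq : t * g i = -(u + 1 - f c0) := by
      rw [ht, div_mul_eq_mul_div, div_eq_iff (by linarith : -g i ≠ 0)]; ring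
    rw [hg] at heq
    rw [show f (Pi.single i 1) = g i from rfl] at hlt
    linarith
  have hex : ∃ i, 0 < g i := by
    by_contra h
    push_neg at h
    have hz0 : ∀ i, g i = 0 := fun i => le_antisymm (h i) (hgnn i)
    have h1 : f c0 = 0 := by rw [hfz]; simp [hz0]
    have h3 := hfC _ ⟨ystar, hystar, rfl⟩
    have h2 : f (R *ᵥ ystar) = 0 := by rw [hfz]; simp [hz0]
    linarith
  obtain ⟨i0, hi0⟩ := hex
  set G : ℝ := ∑ i, g i with hG
  have hGpos : 0 < G := Finset.sum_pos' (fun i _ => hgnn i) ⟨i0, Finset.mem_univ _, hi0⟩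
  have hwG : w * G ≤ u := by
    by_contra h
    push_neg at h
    set t : ℝ := (w * G - u) / (2 * G) with ht
    have htpos : 0 < t := div_pos (by linarith) (by linarith)
    have hmem : (fun _ : Fin n => w - t) ∈ O := fun j => by
      show w - t < w; linarith
    have hlt := hfO _ hmem
    rw [hfz] at hlt
    have hsum : ∑ i, (w - t) * g i = (w - t) * G := by rw [← Finset.mul_sum]
    rw [hsum] at hlt
    have h2 : t * G = (w * G - u) / 2 := by
      rw [ht, div_mul_eq_mul_div,
        div_eq_div_iff (by positivity : (0:ℝ) < 2 * G).ne' (by norm_num : (2:ℝ) ≠ 0)]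
      ring
    nlinarith
  set ustar : Fin n → ℝ := fun i => g i / G with hustar
  have hu : ustar ∈ stdSimplex ℝ (Fin n) := by
    refine ⟨fun i => div_nonneg (hgnn i) hGpos.le, ?_⟩
    rw [hustar]
    simp only
    rw [← Finset.sum_div]
    field_simp
    exact hG.symm
  refine ⟨ustar, ystar, hu, hystar, fun i j => ?_⟩
  have h1 : (R *ᵥ ystar) i ≤ w := by
    rw [hw, hF]
    exact Finset.le_sup' _ (Finset.mem_univ i)
  have hej := hfC _ ⟨Pi.single j 1, single_mem_stdSimplex ℝ j, rfl⟩
  rw [hfz] at hej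
  have hsingle : ∀ i' : Fin n, (R *ᵥ Pi.single j (1:ℝ)) i' = R i' j := by
    intro i'; rw [Matrix.mulVec_single]; simp
  have hej' : u ≤ ∑ i', g i' * R i' j := by
    calc u ≤ ∑ i', (R *ᵥ Pi.single j (1:ℝ)) i' * g i' := hej
      _ = ∑ i', g i' * R i' j := by
          refine Finset.sum_congr rfl fun i' _ => ?_
          rw [hsingle i', mul_comm]
  have hvm : (ustar ᵥ* R) j = (∑ i', g i' * R i' j) / G := by
    simp only [Matrix.vecMul, dotProduct, hustar]
    rw [Finset.sum_div]
    exact Finset.sum_congr rfl fun i' _ => by rw [div_mul_eq_mul_div]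
  rw [hvm, le_div_iff₀ hGpos]
  calc (R *ᵥ ystar) i * G ≤ w * G :=
        mul_le_mul_of_nonneg_right h1 hGpos.le
    _ ≤ u := hwG
    _ ≤ ∑ i', g i' * R i' j := hej'

theorem mulVec_bounds_aux (R : Matrix (Fin n) (Fin n) ℝ)
    (hR : ∀ i j, R i j ∈ Set.Icc (0:ℝ) 1) {y : Fin n → ℝ}
    (hy : y ∈ stdSimplex ℝ (Fin n)) (i : Fin n) :
    (R *ᵥ y) i ∈ Set.Icc (0:ℝ) 1 := by
  constructor
  · show (0:ℝ) ≤ ∑ j, R i j * y j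
    exact Finset.sum_nonneg fun j _ => mul_nonneg (hR i j).1 (hy.1 j)
  · calc ∑ j, R i j * y j ≤ ∑ j, 1 * y j :=
          Finset.sum_le_sum fun j _ => mul_le_mul_of_nonneg_right (hR i j).2 (hy.1 j)
      _ = 1 := by simp [hy.2]

theorem vecMul_bounds_aux (R : Matrix (Fin n) (Fin n) ℝ)
    (hR : ∀ i j, R i j ∈ Set.Icc (0:ℝ) 1) {x : Fin n → ℝ}
    (hx : x ∈ stdSimplex ℝ (Fin n)) (j : Fin n) :
    (x ᵥ* R) j ∈ Set.Icc (0:ℝ) 1 := by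
  constructor
  · show (0:ℝ) ≤ ∑ i, x i * R i j
    exact Finset.sum_nonneg fun i _ => mul_nonneg (hx.1 i) (hR i j).1
  · calc ∑ i, x i * R i j ≤ ∑ i, x i * 1 :=
          Finset.sum_le_sum fun i _ => mul_le_mul_of_nonneg_left (hR i j).2 (hx.1 i)
      _ = 1 := by simp [hx.2]

set_option maxHeartbeats 1000000

/-- If (x,y) is not a δ-Nash equilibrium and (x',y') minimizes the
ρ-directional derivative, a step of size ε ≤ ρ/2 decreases the duality gap by
at least ε·δ. -/
theorem dualityGap_decrease [NeZero n] (R : Matrix (Fin n) (Fin n) ℝ)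
    (hR : ∀ i j, R i j ∈ Set.Icc (0:ℝ) 1)
    (δ : ℝ) (hδ : δ ∈ Set.Ioc (0:ℝ) 1)
    (ρ : ℝ) (hρ : ρ ∈ Set.Ioc (0:ℝ) 1)
    (ε : ℝ) (hε : 0 < ε) (hερ : ε ≤ ρ / 2)
    (x y x' y' : Fin n → ℝ)
    (hx : x ∈ stdSimplex ℝ (Fin n)) (hy : y ∈ stdSimplex ℝ (Fin n))
    (hx' : x' ∈ stdSimplex ℝ (Fin n)) (hy' : y' ∈ stdSimplex ℝ (Fin n))
    (hnot : ¬ isApproxNE R δ x y)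
    (hmin : ∀ u v, u ∈ stdSimplex ℝ (Fin n) → v ∈ stdSimplex ℝ (Fin n) →
      dirDeriv R ρ x y x' y' ≤ dirDeriv R ρ x y u v) :
    V R ((1 - ε) • x + ε • x') ((1 - ε) • y + ε • y') ≤ V R x y - ε * δ := by
  obtain ⟨hδ0, hδ1⟩ := hδ
  obtain ⟨hρ0, hρ1⟩ := hρ
  have hε2 : ε ≤ 1 / 2 := by linarith
  have hne0 : (Finset.univ : Finset (Fin n)).Nonempty := Finset.univ_nonempty
  obtain ⟨istar, -, histar⟩ := Finset.exists_mem_eq_sup' hne0 fun i => (R *ᵥ y) i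
  obtain ⟨jstar, -, hjstar⟩ := Finset.exists_mem_eq_inf' hne0 fun j => (x ᵥ* R) j
  have hleM : ∀ i, (R *ᵥ y) i ≤ (R *ᵥ y) istar := fun i => by
    rw [← histar]; exact Finset.le_sup' _ (Finset.mem_univ i)
  have hmle : ∀ j, (x ᵥ* R) jstar ≤ (x ᵥ* R) j := fun j => by
    rw [← hjstar]; exact Finset.inf'_le _ (Finset.mem_univ j)
  have hBRi : istar ∈ BRr R ρ y := by
    simp only [BRr, Set.mem_setOf_eq]
    intro k
    have := hleM k
    linarith
  have hBRj : jstar ∈ BRc R ρ x := by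
    simp only [BRc, Set.mem_setOf_eq]
    intro k
    have := hmle k
    linarith
  have hV : V R x y = (R *ᵥ y) istar - (x ᵥ* R) jstar := by
    simp only [V]
    rw [histar, hjstar]
  -- finiteness of the images
  have hfinBRr : ∀ f : Fin n → ℝ, (f '' BRr R ρ y).Finite :=
    fun f => Set.Finite.image f (Set.toFinite _)
  have hfinBRc : ∀ f : Fin n → ℝ, (f '' BRc R ρ x).Finite :=
    fun f => Set.Finite.image f (Set.toFinite _)
  -- the minimizing direction has derivative at most -V
  obtain ⟨u, v, hu, hv, huv⟩ := exists_minimax_aux R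
  have hdd : dirDeriv R ρ x y u v ≤ -(V R x y) := by
    simp only [dirDeriv]
    have ha : sSup ((fun i => (R *ᵥ v) i) '' BRr R ρ y) ≤
        sInf ((fun j => (u ᵥ* R) j) '' BRc R ρ x) := by
      apply le_csInf ⟨_, Set.mem_image_of_mem _ hBRj⟩
      rintro b ⟨j, hj, rfl⟩
      apply csSup_le ⟨_, Set.mem_image_of_mem _ hBRi⟩
      rintro a ⟨i, hi, rfl⟩
      exact huv i j
    linarith
  set S : ℝ := sSup ((fun i => (R *ᵥ y') i) '' BRr R ρ y) with hSdef
  set I : ℝ := sInf ((fun j => (x' ᵥ* R) j) '' BRc R ρ x) with hIdef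
  have hkey : S - I ≤ 0 := by
    have h := (hmin u v hu hv).trans hdd
    simp only [dirDeriv] at h
    rw [← hSdef, ← hIdef] at h
    linarith
  -- bounds on S and I
  have hS0 : 0 ≤ S :=
    le_trans (mulVec_bounds_aux R hR hy' istar).1
      (le_csSup (hfinBRr _).bddAbove (Set.mem_image_of_mem _ hBRi))
  have hI1 : I ≤ 1 :=
    le_trans (csInf_le (hfinBRc _).bddBelow (Set.mem_image_of_mem _ hBRj))
      (vecMul_bounds_aux R hR hx' jstar).2
  -- V > δ since (x,y) is not a δ-NE
  have hxRyM : x ⬝ᵥ (R *ᵥ y) ≤ (R *ᵥ y) istar := by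
    calc x ⬝ᵥ (R *ᵥ y) = ∑ i, x i * (R *ᵥ y) i := rfl
      _ ≤ ∑ i, x i * (R *ᵥ y) istar :=
          Finset.sum_le_sum fun i _ => mul_le_mul_of_nonneg_left (hleM i) (hx.1 i)
      _ = (R *ᵥ y) istar := by rw [← Finset.sum_mul, hx.2, one_mul]
  have hmxRy : (x ᵥ* R) jstar ≤ x ⬝ᵥ (R *ᵥ y) := by
    rw [Matrix.dotProduct_mulVec]
    calc (x ᵥ* R) jstar = ∑ j, (x ᵥ* R) jstar * y j := by
          rw [← Finset.mul_sum, hy.2, mul_one]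
      _ ≤ ∑ j, (x ᵥ* R) j * y j :=
          Finset.sum_le_sum fun j _ => mul_le_mul_of_nonneg_right (hmle j) (hy.1 j)
      _ = (x ᵥ* R) ⬝ᵥ y := rfl
  have hVδ : δ < (R *ᵥ y) istar - (x ᵥ* R) jstar := by
    rw [isApproxNE] at hnot
    by_cases hA : ∀ i, (R *ᵥ y) i ≤ x ⬝ᵥ (R *ᵥ y) + δ
    · obtain ⟨j, hj⟩ : ∃ j, (x ᵥ* R) j < x ⬝ᵥ (R *ᵥ y) - δ := by
        by_contra hB
        push_neg at hB
        exact hnot ⟨hA, fun j => hB j⟩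
      have := hmle j
      linarith [hxRyM]
    · push_neg at hA
      obtain ⟨i, hi⟩ := hA
      have := hleM i
      linarith [hmxRy]
  -- convexity decomposition of the step
  have hsupE : (Finset.univ.sup' hne0 fun i => (R *ᵥ ((1 - ε) • y + ε • y')) i)
      ≤ (1 - ε) * (R *ᵥ y) istar + ε * S := by
    apply Finset.sup'_le
    intro i _
    have hdecomp : (R *ᵥ ((1 - ε) • y + ε • y')) i
        = (1 - ε) * (R *ᵥ y) i + ε * (R *ᵥ y') i := by
      rw [Matrix.mulVec_add, Matrix.mulVec_smul, Matrix.mulVec_smul]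
      simp [smul_eq_mul]
    rw [hdecomp]
    have e1 : (0:ℝ) ≤ 1 - ε := by linarith
    by_cases hiBR : i ∈ BRr R ρ y
    · have h1 : (R *ᵥ y) i ≤ (R *ᵥ y) istar := hleM i
      have h2 : (R *ᵥ y') i ≤ S :=
        le_csSup (hfinBRr _).bddAbove (Set.mem_image_of_mem _ hiBR)
      nlinarith
    · simp only [BRr, Set.mem_setOf_eq] at hiBR
      push_neg at hiBR
      obtain ⟨k, hk⟩ := hiBR
      have hkM : (R *ᵥ y) k ≤ (R *ᵥ y) istar := hleM k
      have hyi1 : (R *ᵥ y') i ≤ 1 := (mulVec_bounds_aux R hR hy' i).2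
      have p1 : (1 - ε) * ((R *ᵥ y) i) ≤ (1 - ε) * ((R *ᵥ y) istar - ρ) :=
        mul_le_mul_of_nonneg_left (by linarith) e1
      have p2 : ε * ((R *ᵥ y') i) ≤ ε * 1 := mul_le_mul_of_nonneg_left hyi1 hε.le
      have p3 : ε * ρ ≤ (1 / 2) * ρ := mul_le_mul_of_nonneg_right hε2 hρ0.le
      have p4 : 0 ≤ ε * S := mul_nonneg hε.le hS0
      nlinarith [p1, p2, p3, p4]
  have hinfE : (1 - ε) * (x ᵥ* R) jstar + ε * I
      ≤ Finset.univ.inf' hne0 fun j => (((1 - ε) • x + ε • x') ᵥ* R) j := by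
    apply Finset.le_inf'
    intro j _
    have hdecomp : (((1 - ε) • x + ε • x') ᵥ* R) j
        = (1 - ε) * (x ᵥ* R) j + ε * (x' ᵥ* R) j := by
      rw [Matrix.add_vecMul, Matrix.smul_vecMul, Matrix.smul_vecMul]
      simp [smul_eq_mul]
    rw [hdecomp]
    have e1 : (0:ℝ) ≤ 1 - ε := by linarith
    by_cases hjBR : j ∈ BRc R ρ x
    · have h1 : (x ᵥ* R) jstar ≤ (x ᵥ* R) j := hmle j
      have h2 : I ≤ (x' ᵥ* R) j :=
        csInf_le (hfinBRc _).bddBelow (Set.mem_image_of_mem _ hjBR)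
      nlinarith
    · simp only [BRc, Set.mem_setOf_eq] at hjBR
      push_neg at hjBR
      obtain ⟨k, hk⟩ := hjBR
      have hkm : (x ᵥ* R) jstar ≤ (x ᵥ* R) k := hmle k
      have hxj0 : 0 ≤ (x' ᵥ* R) j := (vecMul_bounds_aux R hR hx' j).1
      have p1 : (1 - ε) * ((x ᵥ* R) jstar + ρ) ≤ (1 - ε) * ((x ᵥ* R) j) :=
        mul_le_mul_of_nonneg_left (by linarith) e1
      have p2 : ε * I ≤ ε * 1 := mul_le_mul_of_nonneg_left hI1 hε.le
      have p3 : ε * ρ ≤ (1 / 2) * ρ := mul_le_mul_of_nonneg_right hε2 hρ0.le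
      have p4 : 0 ≤ ε * (x' ᵥ* R) j := mul_nonneg hε.le hxj0
      nlinarith [p1, p2, p3, p4]
  have hgoal : V R ((1 - ε) • x + ε • x') ((1 - ε) • y + ε • y')
      = (Finset.univ.sup' hne0 fun i => (R *ᵥ ((1 - ε) • y + ε • y')) i)
        - (Finset.univ.inf' hne0 fun j => (((1 - ε) • x + ε • x') ᵥ* R) j) := rfl
  rw [hgoal, hV]
  have p5 : ε * (S - I) ≤ 0 := mul_nonpos_iff.mpr (Or.inl ⟨hε.le, hkey⟩)
  have p6 : ε * δ ≤ ε * ((R *ᵥ y) istar - (x ᵥ* R) jstar) :=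
    mul_le_mul_of_nonneg_left hVδ.le hε.le
  nlinarith [hsupE, hinfE, p5, p6]
end
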